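/- For every fixed x ∈ [0,1], the function φ(x,b) := ((b+x)/(4(2b+1)²))·( 4(b+1)⁴·log(b+1) − 4b⁴·log b − (2b+1)·( 3 + 6b + 6b² − 4(b+x)² ) ) − ((2b²+2b+1)/(2b+1))·(b+x)·log(b+x) converges to 1/3 − x + x² as b → ∞. -/

import Mathlib

open MeasureTheory Set Filter

/-- The function `φ(x,b) = (b+x)·Φ(b, b+x)`, where `Φ` is the sharp constant in the
weighted Poincaré inequality on `[b, b+1]`. -/
noncomputable def phi (x b : ℝ) : ℝ :=
  ((b + x) / (4 * (2 * b + 1) ^ 2)) *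
    (4 * (b + 1) ^ 4 * Real.log (b + 1) - 4 * b ^ 4 * Real.log b
      - (2 * b + 1) * (3 + 6 * b + 6 * b ^ 2 - 4 * (b + x) ^ 2))
  - ((2 * b ^ 2 + 2 * b + 1) / (2 * b + 1)) * (b + x) * Real.log (b + x)

/-- Taylor remainder of `log(1+c/b)` of order `n`, rescaled by `b^n`, tends to `0`. -/
lemma log_rem_tendsto (c : ℝ) (hc0 : 0 ≤ c) (hc1 : c ≤ 1) (n : ℕ) :
    Tendsto (fun b : ℝ => b ^ n *
      (Real.log (1 + c / b) + ∑ i ∈ Finset.range n, (-(c / b)) ^ (i + 1) / (i + 1)))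
      atTop (nhds 0) := by
  apply squeeze_zero_norm' (a := fun b : ℝ => 2 / b)
  · filter_upwards [eventually_ge_atTop (2 : ℝ)] with b hb
    have hb0 : (0 : ℝ) < b := lt_of_lt_of_le (by norm_num) hb
    have hcb : |(-(c / b))| < 1 := by
      rw [abs_neg, abs_of_nonneg (div_nonneg hc0 hb0.le)]
      rw [div_lt_one hb0]
      linarith
    have key := Real.abs_log_sub_add_sum_range_le hcb n
    have h1 : (1 : ℝ) - -(c / b) = 1 + c / b := by ring
    rw [h1] at key
    have hle : |(-(c / b))| ≤ 1 / b := by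
      rw [abs_neg, abs_of_nonneg (div_nonneg hc0 hb0.le)]
      gcongr
    have hhalf : (1 : ℝ) / 2 ≤ 1 - |(-(c / b))| := by
      have : |(-(c / b))| ≤ 1 / 2 := hle.trans (by
        rw [div_le_div_iff₀ hb0 (by norm_num)]; linarith)
      linarith
    have hbound : |(-(c / b))| ^ (n + 1) / (1 - |(-(c / b))|) ≤ 2 / b ^ (n + 1) := by
      have hnum : |(-(c / b))| ^ (n + 1) ≤ (1 / b) ^ (n + 1) :=
        pow_le_pow_left₀ (abs_nonneg _) hle _
      have hpos : (0 : ℝ) < 1 - |(-(c / b))| := lt_of_lt_of_le (by norm_num) hhalf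
      calc |(-(c / b))| ^ (n + 1) / (1 - |(-(c / b))|)
          ≤ (1 / b) ^ (n + 1) / (1 / 2) := by
            apply div_le_div₀ (by positivity) hnum (by norm_num) hhalf
        _ = 2 / b ^ (n + 1) := by
            rw [div_pow, one_pow]; field_simp
    have habs : ‖b ^ n * (Real.log (1 + c / b) +
        ∑ i ∈ Finset.range n, (-(c / b)) ^ (i + 1) / (i + 1))‖
        = b ^ n * |(∑ i ∈ Finset.range n, (-(c / b)) ^ (i + 1) / ((i : ℝ) + 1)) +
            Real.log (1 + c / b)| := by
      rw [Real.norm_eq_abs, abs_mul, abs_of_nonneg (by positivity : (0:ℝ) ≤ b ^ n)]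
      rw [add_comm]
    rw [habs]
    calc b ^ n * |(∑ i ∈ Finset.range n, (-(c / b)) ^ (i + 1) / ((i : ℝ) + 1)) +
            Real.log (1 + c / b)|
        ≤ b ^ n * (2 / b ^ (n + 1)) := by
          apply mul_le_mul_of_nonneg_left (key.trans hbound) (by positivity)
      _ = 2 / b := by
          rw [pow_succ]; field_simp
  · exact tendsto_const_nhds.div_atTop tendsto_id

/-- For every fixed `x ∈ [0,1]`, `φ(x,b) → 1/3 − x + x²` as `b → ∞`. -/
theorem phi_tendsto_atTop (x : ℝ) (hx : x ∈ Set.Icc (0 : ℝ) 1) :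
    Tendsto (fun b : ℝ => phi x b) atTop (nhds (1 / 3 - x + x ^ 2)) := by
  obtain ⟨hx0, hx1⟩ := hx
  -- rescaled Taylor remainders
  set r1 : ℝ → ℝ := fun b => b ^ 4 *
    (Real.log (1 + 1 / b) + ∑ i ∈ Finset.range 4, (-(1 / b)) ^ (i + 1) / (i + 1)) with hr1def
  set rx : ℝ → ℝ := fun b => b ^ 2 *
    (Real.log (1 + x / b) + ∑ i ∈ Finset.range 2, (-(x / b)) ^ (i + 1) / (i + 1)) with hrxdef
  -- rational functions of u = 1/b
  set fP : ℝ → ℝ := fun u =>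
    (512 - 1536 * x + 1536 * x ^ 2 + u * (768 - 1792 * x + 768 * x ^ 2 + 1536 * x ^ 3)
      + u ^ 2 * (256 - 384 * x - 768 * x ^ 2 + 2304 * x ^ 3)
      + u ^ 3 * (-256 + 64 * x - 576 * x ^ 2 + 1536 * x ^ 3)
      + u ^ 4 * (-384 - 256 * x - 96 * x ^ 2 + 576 * x ^ 3)
      + u ^ 5 * (-224 - 384 * x + 96 * x ^ 3)
      + u ^ 6 * (-48 - 224 * x) + u ^ 7 * (-48 * x)) / (192 * (2 + u) ^ 3) with hfPdef
  set fA : ℝ → ℝ := fun u => u * (1 + x * u) * (1 + u) ^ 4 / (2 + u) ^ 2 with hfAdef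
  set fC : ℝ → ℝ := fun u => -((2 + 2 * u + u ^ 2) * (1 + x * u) / (2 + u)) with hfCdef
  have h0 : Tendsto (fun b : ℝ => b⁻¹) atTop (nhds 0) := tendsto_inv_atTop_zero
  have hfP : Tendsto (fun b : ℝ => fP b⁻¹) atTop (nhds (1 / 3 - x + x ^ 2)) := by
    have hcont : ContinuousAt fP 0 := by
      apply ContinuousAt.div (by fun_prop) (by fun_prop)
      norm_num
    have := hcont.tendsto.comp h0
    have hval : fP 0 = 1 / 3 - x + x ^ 2 := by
      simp only [hfPdef]
      norm_num
      ring
    rwa [hval] at this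
  have hfA : Tendsto (fun b : ℝ => fA b⁻¹) atTop (nhds 0) := by
    have hcont : ContinuousAt fA 0 := by
      apply ContinuousAt.div (by fun_prop) (by fun_prop)
      norm_num
    have := hcont.tendsto.comp h0
    have hval : fA 0 = 0 := by simp [hfAdef]
    rwa [hval] at this
  have hfC : Tendsto (fun b : ℝ => fC b⁻¹) atTop (nhds (-1)) := by
    have hcont : ContinuousAt fC 0 := by
      apply ContinuousAt.neg
      apply ContinuousAt.div (by fun_prop) (by fun_prop)
      norm_num
    have := hcont.tendsto.comp h0
    have hval : fC 0 = -1 := by simp [hfCdef]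
    rwa [hval] at this
  have hr1 : Tendsto r1 atTop (nhds 0) := log_rem_tendsto 1 (by norm_num) (by norm_num) 4
  have hrx : Tendsto rx atTop (nhds 0) := log_rem_tendsto x hx0 hx1 2
  have hsum : Tendsto (fun b : ℝ => fP b⁻¹ + fA b⁻¹ * r1 b + fC b⁻¹ * rx b) atTop
      (nhds (1 / 3 - x + x ^ 2)) := by
    have := (hfP.add (hfA.mul hr1)).add (hfC.mul hrx)
    simpa using this
  apply hsum.congr'
  filter_upwards [eventually_ge_atTop (1 : ℝ)] with b hb
  have hb0 : (0 : ℝ) < b := lt_of_lt_of_le one_pos hb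
  have hb0' : b ≠ 0 := hb0.ne'
  have hbx : (0 : ℝ) < b + x := by linarith
  have hb1 : (0 : ℝ) < b + 1 := by linarith
  have h1b : (0 : ℝ) < 1 + 1 / b := by positivity
  have h1x : (0 : ℝ) < 1 + x / b := by positivity
  have h2b : (0 : ℝ) < 2 * b + 1 := by linarith
  have hlog1 : Real.log (b + 1) = Real.log b + Real.log (1 + 1 / b) := by
    rw [← Real.log_mul hb0' h1b.ne']
    congr 1
    field_simp
  have hlogx : Real.log (b + x) = Real.log b + Real.log (1 + x / b) := by
    rw [← Real.log_mul hb0' h1x.ne']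
    congr 1
    field_simp
  simp only [hfPdef, hfAdef, hfCdef, hr1def, hrxdef, phi, hlog1, hlogx,
    Finset.sum_range_succ, Finset.sum_range_zero]
  push_cast
  have h2u : (2 : ℝ) + b⁻¹ ≠ 0 := by positivity
  field_simp
  ring
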